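/- Let (Ω,μ) be a probability space, {φ_k}_{k≥1} an orthonormal system in L²(Ω,μ), and (λ_k) a real sequence such that there is M with Σ_k |λ_k| φ_k(x)² ≤ M for μ-a.e. x (hypothesis H). Let W ∈ L²(Ω×Ω, μ×μ) satisfy W = Σ_{k≥1} λ_k φ_k⊗φ_k with convergence in L²(μ×μ). Then for (μ×μ)-a.e. (x,y) ∈ Ω×Ω, the partial sums Σ_{k=1}^n λ_k φ_k(x)φ_k(y) converge to W(x,y) as n → ∞. -/

import Mathlib

open MeasureTheory Filter

private lemma sum_Icc_one_eq_sum_range (f : ℕ → ℝ) (N : ℕ) :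
    ∑ k ∈ Finset.Icc 1 N, f k
      = ∑ k ∈ Finset.range (N + 1), (if k = 0 then 0 else f k) := by
  induction N with
  | zero => simp
  | succ n ih =>
      rw [Finset.sum_Icc_succ_top (Nat.one_le_iff_ne_zero.2 (Nat.succ_ne_zero n)),
        Finset.sum_range_succ, ih, if_neg (Nat.succ_ne_zero n)]

/-- Lemma 8 of the paper: if `{φ_k}` is an orthonormal system in
`L²(Ω,μ)` and `(λ_k)` satisfies hypothesis `H` (i.e. `Σ_k |λ_k| φ_k(x)² ≤ M` a.e.),
and `W ∈ L²(μ×μ)` equals `Σ_k λ_k φ_k ⊗ φ_k` in the `L²` sense, then the partial sums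
`Σ_{k=1}^n λ_k φ_k(x) φ_k(y)` converge to `W(x,y)` for `(μ×μ)`-a.e. `(x,y)`. -/
theorem spectral_expansion_ae_pointwise_convergence
    {Ω : Type*} [MeasurableSpace Ω] (μ : Measure Ω) [IsProbabilityMeasure μ]
    (lam : ℕ → ℝ) (φ : ℕ → Ω → ℝ) (hφmeas : ∀ k, Measurable (φ k))
    (horth : ∀ j k, 1 ≤ j → 1 ≤ k →
      ∫ x, φ j x * φ k x ∂μ = if j = k then (1 : ℝ) else 0)
    (hH : ∃ M : ℝ, ∀ᵐ x ∂μ, ∀ N : ℕ, ∑ k ∈ Finset.Icc 1 N, |lam k| * φ k x ^ 2 ≤ M)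
    (W : Ω → Ω → ℝ) (hWmeas : Measurable (Function.uncurry W))
    (hWL2 : MemLp (fun p : Ω × Ω => W p.1 p.2) 2 (μ.prod μ))
    (hL2 : Tendsto
      (fun N => ∫ p : Ω × Ω,
        (W p.1 p.2 - ∑ k ∈ Finset.Icc 1 N, lam k * φ k p.1 * φ k p.2) ^ 2 ∂(μ.prod μ))
      atTop (nhds 0)) :
    ∀ᵐ p ∂(μ.prod μ), Tendsto
      (fun N => ∑ k ∈ Finset.Icc 1 N, lam k * φ k p.1 * φ k p.2)
      atTop (nhds (W p.1 p.2)) := by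
  obtain ⟨M, hM⟩ := hH
  set S : ℕ → Ω × Ω → ℝ :=
    fun N p => ∑ k ∈ Finset.Icc 1 N, lam k * φ k p.1 * φ k p.2 with hS
  -- each φ k (k ≥ 1) has integrable square
  have hIntSq : ∀ k, 1 ≤ k → Integrable (fun x => φ k x ^ 2) μ := by
    intro k hk
    by_contra hni
    have h1 : ∫ x, φ k x * φ k x ∂μ = 1 := by simpa using horth k k hk hk
    have h0 : ∫ x, φ k x * φ k x ∂μ = 0 := by
      apply integral_undef
      intro h
      exact hni (by simpa [sq] using h)
    rw [h0] at h1; norm_num at h1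
  -- each partial sum is in L²
  have hSmem : ∀ N, MemLp (S N) 2 (μ.prod μ) := by
    intro N
    have hterm : ∀ k ∈ Finset.Icc 1 N,
        MemLp (fun p : Ω × Ω => lam k * φ k p.1 * φ k p.2) 2 (μ.prod μ) := by
      intro k hk
      have hk1 : 1 ≤ k := (Finset.mem_Icc.mp hk).1
      have hbase : MemLp (fun p : Ω × Ω => φ k p.1 * φ k p.2) 2 (μ.prod μ) := by
        have hmeas : AEStronglyMeasurable (fun p : Ω × Ω => φ k p.1 * φ k p.2) (μ.prod μ) :=
          (((hφmeas k).comp measurable_fst).mul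
            ((hφmeas k).comp measurable_snd)).aestronglyMeasurable
        rw [memLp_two_iff_integrable_sq hmeas]
        have hint := (hIntSq k hk1).mul_prod (hIntSq k hk1) (μ := μ) (ν := μ)
        apply hint.congr
        filter_upwards with p
        ring
      have hmul := hbase.const_mul (lam k)
      apply hmul.ae_eq
      filter_upwards with p
      ring
    exact memLp_finset_sum _ hterm
  have hSmeas : ∀ N, Measurable (S N) := by
    intro N
    apply Finset.measurable_sum
    intro k _
    exact (measurable_const.mul ((hφmeas k).comp measurable_fst)).mul
      ((hφmeas k).comp measurable_snd)
  -- L² norm of difference tends to zero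
  have heLp : Tendsto (fun N => eLpNorm (S N - fun p : Ω × Ω => W p.1 p.2) 2 (μ.prod μ))
      atTop (nhds 0) := by
    have key : ∀ N, eLpNorm (S N - fun p : Ω × Ω => W p.1 p.2) 2 (μ.prod μ)
        = ENNReal.ofReal ((∫ p : Ω × Ω, (W p.1 p.2 - S N p) ^ 2 ∂(μ.prod μ)) ^ ((2:ℝ)⁻¹)) := by
      intro N
      have hmem : MemLp ((fun p : Ω × Ω => W p.1 p.2) - S N) 2 (μ.prod μ) :=
        hWL2.sub (hSmem N)
      rw [eLpNorm_sub_comm,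
        hmem.eLpNorm_eq_integral_rpow_norm two_ne_zero ENNReal.ofNat_ne_top]
      have hi : ∫ a, ‖((fun p : Ω × Ω => W p.1 p.2) - S N) a‖ ^ (2:ENNReal).toReal ∂(μ.prod μ)
          = ∫ p : Ω × Ω, (W p.1 p.2 - S N p) ^ 2 ∂(μ.prod μ) := by
        apply integral_congr_ae
        filter_upwards with p
        rw [show (2:ENNReal).toReal = ((2:ℕ):ℝ) by norm_num, Real.rpow_natCast]
        simp [Pi.sub_apply, sq_abs]
      rw [hi]
      norm_num
    simp_rw [key]
    have h1 : Tendsto (fun N => (∫ p : Ω × Ω, (W p.1 p.2 - S N p) ^ 2 ∂(μ.prod μ)) ^ ((2:ℝ)⁻¹))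
        atTop (nhds ((0:ℝ) ^ ((2:ℝ)⁻¹))) := by
      apply Tendsto.rpow_const hL2
      right; norm_num
    rw [Real.zero_rpow (by norm_num)] at h1
    have := ENNReal.tendsto_ofReal h1
    simpa using this
  -- convergence in measure, a.e. convergent subsequence
  have hInM : TendstoInMeasure (μ.prod μ) S atTop (fun p : Ω × Ω => W p.1 p.2) :=
    tendstoInMeasure_of_tendsto_eLpNorm (two_ne_zero)
      (fun N => (hSmeas N).aestronglyMeasurable) hWL2.aestronglyMeasurable heLp
  obtain ⟨ns, hns, hnsae⟩ := hInM.exists_seq_tendsto_ae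
  -- a.e. p, the full sequence of partial sums converges to something
  have hbound : ∀ᵐ p ∂(μ.prod μ),
      (∀ N : ℕ, ∑ k ∈ Finset.Icc 1 N, |lam k| * φ k p.1 ^ 2 ≤ M) ∧
      (∀ N : ℕ, ∑ k ∈ Finset.Icc 1 N, |lam k| * φ k p.2 ^ 2 ≤ M) := by
    have h1 := (Measure.quasiMeasurePreserving_fst (μ := μ) (ν := μ)).ae hM
    have h2 := (Measure.quasiMeasurePreserving_snd (μ := μ) (ν := μ)).ae hM
    exact h1.and h2
  have hconv : ∀ᵐ p ∂(μ.prod μ), ∃ l : ℝ, Tendsto (fun N => S N p) atTop (nhds l) := by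
    filter_upwards [hbound] with p hp
    obtain ⟨h1, h2⟩ := hp
    set b : ℕ → ℝ := fun k => if k = 0 then 0 else lam k * φ k p.1 * φ k p.2 with hb
    have hsum : Summable fun k => |b k| := by
      apply summable_of_sum_range_le (fun k => abs_nonneg _)
      intro n
      have step : ∀ m : ℕ, ∑ k ∈ Finset.range m, |b k|
          ≤ ∑ k ∈ Finset.range (m + 1), |b k| := by
        intro m
        rw [Finset.sum_range_succ]
        nlinarith [abs_nonneg (b m)]
      calc ∑ k ∈ Finset.range n, |b k| ≤ ∑ k ∈ Finset.range (n + 1), |b k| := step n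
        _ = ∑ k ∈ Finset.Icc 1 n, |lam k * φ k p.1 * φ k p.2| := by
            rw [sum_Icc_one_eq_sum_range (fun k => |lam k * φ k p.1 * φ k p.2|) n]
            apply Finset.sum_congr rfl
            intro k _
            by_cases hk : k = 0 <;> simp [hb, hk]
        _ ≤ ∑ k ∈ Finset.Icc 1 n,
              (|lam k| * φ k p.1 ^ 2 / 2 + |lam k| * φ k p.2 ^ 2 / 2) := by
            apply Finset.sum_le_sum
            intro k _
            have h3 : |lam k * φ k p.1 * φ k p.2| = |lam k| * |φ k p.1 * φ k p.2| := by
              rw [mul_assoc, abs_mul]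
            rw [h3]
            have h4 : |φ k p.1 * φ k p.2| ≤ (φ k p.1 ^ 2 + φ k p.2 ^ 2) / 2 := by
              rw [abs_mul]
              nlinarith [sq_abs (φ k p.1), sq_abs (φ k p.2), sq_nonneg (|φ k p.1| - |φ k p.2|)]
            nlinarith [abs_nonneg (lam k)]
        _ ≤ M := by
            rw [Finset.sum_add_distrib]
            have eA : ∑ k ∈ Finset.Icc 1 n, |lam k| * φ k p.1 ^ 2 / 2
                = (∑ k ∈ Finset.Icc 1 n, |lam k| * φ k p.1 ^ 2) / 2 := by
              rw [← Finset.sum_div]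
            have eB : ∑ k ∈ Finset.Icc 1 n, |lam k| * φ k p.2 ^ 2 / 2
                = (∑ k ∈ Finset.Icc 1 n, |lam k| * φ k p.2 ^ 2) / 2 := by
              rw [← Finset.sum_div]
            rw [eA, eB]
            linarith [h1 n, h2 n]
    have hsb : Summable b := hsum.of_abs
    refine ⟨∑' k, b k, ?_⟩
    have ht : Tendsto (fun n => ∑ k ∈ Finset.range n, b k) atTop (nhds (∑' k, b k)) :=
      hsb.hasSum.tendsto_sum_nat
    have ht2 : Tendsto (fun N : ℕ => ∑ k ∈ Finset.range (N + 1), b k) atTop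
        (nhds (∑' k, b k)) := ht.comp (tendsto_add_atTop_nat 1)
    apply ht2.congr
    intro N
    exact (sum_Icc_one_eq_sum_range (fun k => lam k * φ k p.1 * φ k p.2) N).symm
  -- combine
  filter_upwards [hconv, hnsae] with p hp hpsub
  obtain ⟨l, hl⟩ := hp
  have hsub2 : Tendsto (fun i => S (ns i) p) atTop (nhds l) :=
    hl.comp hns.tendsto_atTop
  have : l = W p.1 p.2 := tendsto_nhds_unique hsub2 hpsub
  exact this ▸ hl
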